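/- For every z ∈ (−1,1), one has ∫_{−1}^{1} log( (√(1−z²)·√(1−w²) + 1 − z·w) / |z−w| ) dw = π·√(1−z²). -/

import Mathlib

open Real MeasureTheory Set intervalIntegral

lemma intervalIntegrable_log_zero {c : ℝ} (hc : 0 ≤ c) :
    IntervalIntegrable Real.log volume 0 c := by
  have hg : IntervalIntegrable (fun x : ℝ => 2 * x ^ (-(1:ℝ)/2) + x) volume 0 c :=
    ((intervalIntegrable_rpow' (by norm_num)).const_mul 2).add
      (continuous_id.intervalIntegrable 0 c)
  refine hg.mono_fun' Real.measurable_log.aestronglyMeasurable ?_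
  filter_upwards [ae_restrict_mem measurableSet_uIoc] with x hx
  rw [Set.uIoc_of_le hc] at hx
  have hx0 : 0 < x := hx.1
  have hrp : (0:ℝ) < x ^ (-(1:ℝ)/2) := Real.rpow_pos_of_pos hx0 _
  rcases le_or_gt 1 x with h1 | h1
  · have hb : Real.log x ≤ x := (Real.log_le_sub_one_of_pos hx0).trans (by linarith)
    have : ‖Real.log x‖ = Real.log x := by
      rw [Real.norm_eq_abs, abs_of_nonneg (Real.log_nonneg h1)]
    rw [this]; nlinarith
  · have hneg : Real.log x < 0 := Real.log_neg hx0 h1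
    have : ‖Real.log x‖ = -Real.log x := by
      rw [Real.norm_eq_abs, abs_of_neg hneg]
    rw [this]
    have h2 : Real.log (x ^ (-(1:ℝ)/2)) = (-(1:ℝ)/2) * Real.log x := Real.log_rpow hx0 _
    have h3 : Real.log (x ^ (-(1:ℝ)/2)) ≤ x ^ (-(1:ℝ)/2) - 1 :=
      Real.log_le_sub_one_of_pos hrp
    nlinarith

theorem defNLS_NDR_vacuum_condensate (z : ℝ) (hz : z ∈ Set.Ioo (-1 : ℝ) 1) :
    (∫ w in (-1 : ℝ)..1,
        Real.log ((Real.sqrt (1 - z ^ 2) * Real.sqrt (1 - w ^ 2) + 1 - z * w) / |z - w|))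
      = π * Real.sqrt (1 - z ^ 2) := by
  obtain ⟨hz1, hz2⟩ := hz
  set s : ℝ := Real.sqrt (1 - z ^ 2) with hs
  have hzsq : s ^ 2 = 1 - z ^ 2 := Real.sq_sqrt (by nlinarith)
  have hs0 : 0 ≤ s := Real.sqrt_nonneg _
  set f : ℝ → ℝ := fun w => Real.log ((s * Real.sqrt (1 - w ^ 2) + 1 - z * w) / |z - w|)
    with hf
  set F : ℝ → ℝ := fun w =>
    (w - z) * Real.log (s * Real.sqrt (1 - w ^ 2) + 1 - z * w)
      + (z - w) * Real.log (z - w) - s * Real.arccos w with hF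
  -- positivity of the numerator
  have hNpos : ∀ w ∈ Set.Icc (-1:ℝ) 1, 0 < s * Real.sqrt (1 - w ^ 2) + 1 - z * w := by
    intro w hw
    have h1 : 0 ≤ s * Real.sqrt (1 - w ^ 2) := mul_nonneg hs0 (Real.sqrt_nonneg _)
    have h2 : z * w ≤ |z| := by
      calc z * w ≤ |z * w| := le_abs_self _
        _ = |z| * |w| := abs_mul z w
        _ ≤ |z| * 1 := by gcongr; exact abs_le.mpr ⟨hw.1, hw.2⟩
        _ = |z| := mul_one _
    have h3 : |z| < 1 := abs_lt.mpr ⟨hz1, hz2⟩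
    linarith
  -- continuity of F on [-1,1]
  have hNcont : Continuous fun w : ℝ => s * Real.sqrt (1 - w ^ 2) + 1 - z * w := by
    fun_prop
  have hFcont : ContinuousOn F (Set.Icc (-1:ℝ) 1) := by
    apply ContinuousOn.sub
    apply ContinuousOn.add
    · exact (continuousOn_id.sub continuousOn_const).mul
        (hNcont.continuousOn.log fun w hw => (hNpos w hw).ne')
    · exact (Real.continuous_mul_log.comp (continuous_const.sub continuous_id)).continuousOn
    · exact (continuous_const.mul Real.continuous_arccos).continuousOn
  -- derivative of F
  have hderiv : ∀ x ∈ Set.Ioo (-1:ℝ) 1, x ≠ z → HasDerivAt F (f x) x := by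
    intro x hx hxz
    have hx1 : (0:ℝ) < 1 - x ^ 2 := by nlinarith [hx.1, hx.2]
    set t : ℝ := Real.sqrt (1 - x ^ 2) with ht
    have ht0 : 0 < t := Real.sqrt_pos.mpr hx1
    have ht2 : t ^ 2 = 1 - x ^ 2 := Real.sq_sqrt hx1.le
    have hNx : 0 < s * t + 1 - z * x := hNpos x ⟨hx.1.le, hx.2.le⟩
    have hzx : z - x ≠ 0 := sub_ne_zero.mpr (Ne.symm hxz)
    have h1 : HasDerivAt (fun w : ℝ => 1 - w ^ 2) (-(2 * x)) x := by
      simpa using (hasDerivAt_pow 2 x).const_sub 1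
    have hsq : HasDerivAt (fun w : ℝ => Real.sqrt (1 - w ^ 2)) (-(2 * x) / (2 * t)) x :=
      h1.sqrt hx1.ne'
    have hNder : HasDerivAt (fun w : ℝ => s * Real.sqrt (1 - w ^ 2) + 1 - z * w)
        (s * (-(2 * x) / (2 * t)) - z) x := by
      have := ((hsq.const_mul s).add_const 1).sub ((hasDerivAt_id x).const_mul z)
      exact this.congr_deriv (by ring)
    have hlogN : HasDerivAt (fun w : ℝ => Real.log (s * Real.sqrt (1 - w ^ 2) + 1 - z * w))
        ((s * (-(2 * x) / (2 * t)) - z) / (s * t + 1 - z * x)) x := by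
      simpa using hNder.log hNx.ne'
    have hterm1 : HasDerivAt (fun w : ℝ =>
        (w - z) * Real.log (s * Real.sqrt (1 - w ^ 2) + 1 - z * w))
        (1 * Real.log (s * t + 1 - z * x)
          + (x - z) * ((s * (-(2 * x) / (2 * t)) - z) / (s * t + 1 - z * x))) x := by
      have := ((hasDerivAt_id x).sub_const z).mul hlogN
      exact this
    have hterm2 : HasDerivAt (fun w : ℝ => (z - w) * Real.log (z - w))
        ((Real.log (z - x) + 1) * (-1)) x := by
      have := (Real.hasDerivAt_mul_log hzx).comp x ((hasDerivAt_id x).const_sub z)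
      exact this
    have hterm3 : HasDerivAt (fun w : ℝ => s * Real.arccos w) (s * -(1 / t)) x :=
      (Real.hasDerivAt_arccos hx.1.ne' hx.2.ne).const_mul s
    have hFder := (hterm1.add hterm2).sub hterm3
    have hfx : f x = Real.log (s * t + 1 - z * x) - Real.log (z - x) := by
      rw [hf]
      simp only
      rw [Real.log_div hNx.ne' (abs_ne_zero.mpr hzx), Real.log_abs]
    have key : (x - z) * ((s * (-(2 * x) / (2 * t)) - z) / (s * t + 1 - z * x))
        - 1 + s * (1 / t) = 0 := by
      have hNne := hNx.ne'
      have htne := ht0.ne'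
      have e1 : ((s * (-(2 * x) / (2 * t)) - z) / (s * t + 1 - z * x)) * (s * t + 1 - z * x)
          = s * (-(2 * x) / (2 * t)) - z := div_mul_cancel₀ _ hNne
      have e2 : (1 / t) * t = 1 := one_div_mul_cancel htne
      have e3 : (-(2 * x) / (2 * t)) * t = -x := by field_simp
      have e : ((x - z) * ((s * (-(2 * x) / (2 * t)) - z) / (s * t + 1 - z * x))
          - 1 + s * (1 / t)) * (t * (s * t + 1 - z * x)) = 0 := by
        linear_combination (x - z) * t * e1 + s * (s * t + 1 - z * x) * e2 + (x - z) * s * e3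
          + (-s) * ht2 + t * hzsq
      exact (mul_eq_zero.mp e).resolve_right (mul_ne_zero htne hNne)
    rw [hF]
    refine hFder.congr_deriv ?_
    rw [hfx]
    linear_combination key
  -- integrability
  have hlogzw : (fun w : ℝ => Real.log (z - w)) = fun w => Real.log (w - z) := by
    funext w; rw [← Real.log_neg_eq_log (w - z), neg_sub]
  have hcontN : ∀ a b : ℝ, Set.uIcc a b ⊆ Set.Icc (-1:ℝ) 1 →
      IntervalIntegrable (fun w : ℝ => Real.log (s * Real.sqrt (1 - w ^ 2) + 1 - z * w))
        volume a b := by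
    intro a b hab
    exact ((hNcont.continuousOn.mono hab).log
      fun w hw => (hNpos w (hab hw)).ne').intervalIntegrable
  have haez : ∀ᵐ w : ℝ, w ≠ z := by
    have : (volume : Measure ℝ) {z} = 0 := Real.volume_singleton
    rw [MeasureTheory.ae_iff]
    convert this using 2
    ext w; simp
  have hintpiece : ∀ a b : ℝ, Set.uIcc a b ⊆ Set.Icc (-1:ℝ) 1 →
      IntervalIntegrable (fun w : ℝ => Real.log (z - w)) volume a b →
      IntervalIntegrable f volume a b := by
    intro a b hab hlog
    refine ((hcontN a b hab).sub hlog).congr_ae ?_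
    filter_upwards [ae_restrict_of_ae haez, ae_restrict_mem measurableSet_uIoc] with w hw hw2
    have hwm : w ∈ Set.Icc (-1:ℝ) 1 := hab (Set.uIoc_subset_uIcc hw2)
    have hzw : z - w ≠ 0 := sub_ne_zero.mpr (Ne.symm hw)
    rw [hf]
    simp only
    rw [Real.log_div (hNpos w hwm).ne' (abs_ne_zero.mpr hzw), Real.log_abs]
  have hleft : IntervalIntegrable f volume (-1) z := by
    refine hintpiece _ _ ?_ ?_
    · rw [Set.uIcc_of_le (by linarith)]
      exact Set.Icc_subset_Icc le_rfl hz2.le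
    · have := (intervalIntegrable_log_zero (c := z + 1) (by linarith)).comp_sub_left z
      simpa using this.symm
  have hright : IntervalIntegrable f volume z 1 := by
    refine hintpiece _ _ ?_ ?_
    · rw [Set.uIcc_of_le (by linarith)]
      exact Set.Icc_subset_Icc hz1.le le_rfl
    · rw [hlogzw]
      have := (intervalIntegrable_log_zero (c := 1 - z) (by linarith)).comp_sub_right z
      simpa using this
  -- FTC on both pieces
  have hint1 : ∫ w in (-1:ℝ)..z, f w = F z - F (-1) := by
    refine integral_eq_sub_of_hasDeriv_right_of_le (by linarith)
      (hFcont.mono (Set.Icc_subset_Icc le_rfl hz2.le)) (fun x hx => ?_) hleft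
    exact ((hderiv x ⟨hx.1, hx.2.trans hz2⟩ hx.2.ne).hasDerivWithinAt)
  have hint2 : ∫ w in z..(1:ℝ), f w = F 1 - F z := by
    refine integral_eq_sub_of_hasDeriv_right_of_le (by linarith)
      (hFcont.mono (Set.Icc_subset_Icc hz1.le le_rfl)) (fun x hx => ?_) hright
    exact ((hderiv x ⟨hz1.trans hx.1, hx.2⟩ hx.1.ne').hasDerivWithinAt)
  -- endpoint values
  have hF1 : F 1 = 0 := by
    rw [hF]
    simp only
    norm_num [Real.arccos_one]
    rw [show z - 1 = -(1 - z) by ring, Real.log_neg_eq_log]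
    ring_nf
  have hFm1 : F (-1) = -(s * π) := by
    rw [hF]
    simp only
    norm_num [Real.arccos_neg_one]
    ring
  have hsplit := integral_add_adjacent_intervals hleft hright
  calc (∫ w in (-1:ℝ)..1, f w)
      = (∫ w in (-1:ℝ)..z, f w) + ∫ w in z..(1:ℝ), f w := hsplit.symm
    _ = (F z - F (-1)) + (F 1 - F z) := by rw [hint1, hint2]
    _ = π * s := by rw [hF1, hFm1]; ring
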